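/- Let τ₀ > 0 and ν > 0 be real numbers, let λ ∈ ℂ with Re λ ≥ 0, and let Ω ∈ ℝ. If (iΩ)³ − 2λ·τ₀^{3/2}·(iΩ)² − 2λ·τ₀²·ν⁻¹·(iΩ) + 2λ²·τ₀^{7/2}·ν⁻¹ + 4λ·τ₀⁴·ν⁻¹ = 0, then λ = 0 and Ω = 0. -/

import Mathlib

/-- No root with `Ω > 0` and `Re λ ≥ 0`. -/
lemma stmt_4_auxpos (a b d x y Ω : ℝ) (ha : 0 < a) (hb : 0 < b) (hd : 0 < d)
    (hx : 0 ≤ x) (hΩ : 0 < Ω)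
    (hR : a*Ω^2*x + b*Ω*y + a*b*x^2 - a*b*y^2 + 2*d*x = 0)
    (hI : -Ω^3 + 2*a*Ω^2*y - 2*b*Ω*x + 4*a*b*x*y + 4*d*y = 0) : False := by
  have hRA : Ω^3*y - 2*a*Ω^2*(x^2+y^2) - 2*a*b*x*(x^2+y^2) - 4*d*(x^2+y^2) = 0 := by
    linear_combination (-2*x)*hR - y*hI
  -- y > 0
  have hy : 0 < y := by
    rcases eq_or_lt_of_le (by positivity : (0:ℝ) ≤ x^2 + y^2) with hr | hr
    · have hx0 : x = 0 := by nlinarith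
      have hy0 : y = 0 := by nlinarith
      rw [hx0, hy0] at hI
      nlinarith [mul_pos hΩ (mul_pos hΩ hΩ)]
    · nlinarith [mul_pos (mul_pos hΩ hΩ) hΩ, mul_pos ha (mul_pos hΩ hΩ),
        mul_pos (mul_pos ha hb) hr, mul_pos hd hr]
  -- a*y ≥ Ω
  have hay : Ω ≤ a*y := by
    nlinarith [mul_pos hb hy, mul_nonneg (mul_nonneg ha.le (mul_pos hΩ hΩ).le) hx,
      mul_nonneg (mul_nonneg ha.le hb.le) (mul_nonneg hx hx), mul_nonneg hd.le hx]
  -- 2bΩx ≥ Ω³ + 4abxy + 4dy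
  have h2 : Ω^3 + 4*a*b*x*y + 4*d*y ≤ 2*b*Ω*x := by
    nlinarith [mul_nonneg (mul_pos hΩ hΩ).le (sub_nonneg.mpr hay)]
  have hx0 : 0 < x := by
    nlinarith [mul_pos (mul_pos hΩ hΩ) hΩ, mul_pos hd hy, mul_pos hb hΩ,
      mul_nonneg (mul_nonneg ha.le (mul_nonneg hb.le hy.le)) hx]
  -- contradiction
  nlinarith [mul_pos (mul_pos hΩ hΩ) hΩ, mul_pos hd hy,
    mul_nonneg (mul_nonneg hb.le (sub_nonneg.mpr hay)) hx0.le,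
    mul_pos (mul_pos hb hΩ) hx0]

/-- The real form of the consistent-splitting statement. -/
lemma stmt_4_auxmain (a b d x y Ω : ℝ) (ha : 0 < a) (hb : 0 < b) (hd : 0 < d)
    (hx : 0 ≤ x)
    (hR : a*Ω^2*x + b*Ω*y + a*b*x^2 - a*b*y^2 + 2*d*x = 0)
    (hI : -Ω^3 + 2*a*Ω^2*y - 2*b*Ω*x + 4*a*b*x*y + 4*d*y = 0) :
    x = 0 ∧ y = 0 ∧ Ω = 0 := by
  rcases lt_trichotomy Ω 0 with hΩ | hΩ | hΩ
  · exact (stmt_4_auxpos a b d x (-y) (-Ω) ha hb hd hx (by linarith)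
      (by linear_combination hR) (by linear_combination -hI)).elim
  · subst hΩ
    have hy0 : y = 0 := by
      have h1 : y * (4*a*b*x + 4*d) = 0 := by linear_combination hI
      have h2 : 0 < 4*a*b*x + 4*d := by positivity
      exact (mul_eq_zero.mp h1).resolve_right (ne_of_gt h2)
    subst hy0
    have hx0 : x = 0 := by nlinarith [mul_nonneg (mul_nonneg ha.le hb.le) (mul_nonneg hx hx), mul_nonneg hd.le hx]
    exact ⟨hx0, rfl, rfl⟩
  · exact (stmt_4_auxpos a b d x y Ω ha hb hd hx hΩ hR hI).elim

/-- Consistent splitting on the closed right half plane: the characteristic polynomial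
of `A₀(λ)` has no purely imaginary root `γ = iΩ` for `Re λ ≥ 0` unless `λ = 0`, `Ω = 0`. -/
theorem stmt_4 (τ₀ ν : ℝ) (hτ₀ : 0 < τ₀) (hν : 0 < ν) (lam : ℂ) (hlam : 0 ≤ lam.re)
    (Ω : ℝ)
    (h : (Complex.I * (Ω : ℂ)) ^ 3
        - 2 * lam * ((τ₀ ^ ((3:ℝ)/2) : ℝ) : ℂ) * (Complex.I * (Ω : ℂ)) ^ 2
        - 2 * lam * ((τ₀ ^ 2 : ℝ) : ℂ) * ((ν⁻¹ : ℝ) : ℂ) * (Complex.I * (Ω : ℂ))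
        + 2 * lam ^ 2 * ((τ₀ ^ ((7:ℝ)/2) : ℝ) : ℂ) * ((ν⁻¹ : ℝ) : ℂ)
        + 4 * lam * ((τ₀ ^ 4 : ℝ) : ℂ) * ((ν⁻¹ : ℝ) : ℂ) = 0) :
    lam = 0 ∧ Ω = 0 := by
  set a : ℝ := τ₀ ^ ((3:ℝ)/2) with haa
  have ha : 0 < a := Real.rpow_pos_of_pos hτ₀ _
  have ha2 : a * a = τ₀ ^ 3 := by
    rw [haa, ← Real.rpow_add hτ₀]
    norm_num
  have hc : τ₀ ^ ((7:ℝ)/2) = a * τ₀ ^ 2 := by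
    rw [haa, ← Real.rpow_natCast τ₀ 2, ← Real.rpow_add hτ₀]
    norm_num
  rw [hc] at h
  set x := lam.re with hxx
  set y := lam.im with hyy
  have hlxy : lam = (x:ℂ) + (y:ℂ) * Complex.I := (Complex.re_add_im lam).symm
  rw [hlxy] at h
  have hre := congrArg Complex.re h
  have him := congrArg Complex.im h
  simp [Complex.add_re, Complex.sub_re, Complex.mul_re, Complex.mul_im,
    Complex.add_im, Complex.sub_im, pow_succ] at hre him
  ring_nf at hre him
  have hb : 0 < τ₀^2 * ν⁻¹ := by positivity
  have hd : 0 < τ₀^4 * ν⁻¹ := by positivity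
  obtain ⟨hx0, hy0, hΩ0⟩ := stmt_4_auxmain a (τ₀^2 * ν⁻¹) (τ₀^4 * ν⁻¹) x y Ω ha hb hd hlam
    (by linear_combination hre/2) (by linear_combination him)
  refine ⟨?_, hΩ0⟩
  rw [hlxy, hx0, hy0]
  simp
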